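/- In the symmetric group S₄, for no element σ of order three do there exist conjugates τ₁,…,τ_ℓ of σ and positive integers e₁,…,e_ℓ with τ₁^{e₁}⋯τ_ℓ^{e_ℓ} = σ = τ₁^{2e₁}⋯τ_ℓ^{2e_ℓ}. -/

import Mathlib

set_option maxRecDepth 10000

def cc : Equiv.Perm (Fin 4) := Equiv.swap 0 1 * Equiv.swap 1 2

def psi (g : Equiv.Perm (Fin 4)) : ZMod 3 :=
  if g * g = 1 then 0 else if (g⁻¹ * cc) * (g⁻¹ * cc) = 1 then 1 else 2

lemma key12 : ∀ g : Equiv.Perm (Fin 4), g ^ 3 = 1 → g ≠ 1 →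
    Equiv.Perm.sign g = 1 ∧ psi g ≠ 0 := by decide

lemma psi_mul : ∀ x y : Equiv.Perm (Fin 4), Equiv.Perm.sign x = 1 →
    Equiv.Perm.sign y = 1 → psi (x * y) = psi x + psi y := by decide

lemma psi_one : psi 1 = 0 := by decide

lemma psi_pow (g : Equiv.Perm (Fin 4)) (hg : Equiv.Perm.sign g = 1) (e : ℕ) :
    psi (g ^ e) = (e : ZMod 3) * psi g ∧ Equiv.Perm.sign (g ^ e) = 1 := by
  induction e with
  | zero => simpa using psi_one
  | succ n ih =>
    have hs : Equiv.Perm.sign (g ^ (n + 1)) = 1 := by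
      rw [map_pow, hg, one_pow]
    refine ⟨?_, hs⟩
    rw [pow_succ, psi_mul _ _ ih.2 hg, ih.1]
    push_cast
    ring

lemma psi_prod (L : List (Equiv.Perm (Fin 4))) (hL : ∀ x ∈ L, Equiv.Perm.sign x = 1) :
    psi L.prod = (L.map psi).sum ∧ Equiv.Perm.sign L.prod = 1 := by
  induction L with
  | nil => simpa using psi_one
  | cons a t ih =>
    have ht := ih (fun x hx => hL x (List.mem_cons_of_mem a hx))
    have ha := hL a (List.mem_cons_self (a := a) (l := t))
    refine ⟨?_, ?_⟩
    · rw [List.prod_cons, psi_mul _ _ ha ht.2, ht.1, List.map_cons, List.sum_cons]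
    · rw [List.prod_cons, map_mul, ha, ht.2, one_mul]

/-- No compression data exist over S₄. -/
theorem stmt_12 :
    ∀ σ : Equiv.Perm (Fin 4), orderOf σ = 3 →
      ¬ ∃ (ℓ : ℕ) (τ : Fin ℓ → Equiv.Perm (Fin 4)) (e : Fin ℓ → ℕ), (∀ i, 1 ≤ e i) ∧
        (∀ i, IsConj σ (τ i)) ∧
        (List.ofFn (fun i : Fin ℓ => τ i ^ e i)).prod = σ ∧
        (List.ofFn (fun i : Fin ℓ => τ i ^ (2 * e i))).prod = σ := by
  rintro σ hord ⟨ℓ, τ, e, -, hconj, h1, h2⟩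
  have hσ3 : σ ^ 3 = 1 := by rw [← hord]; exact pow_orderOf_eq_one σ
  have hσ1 : σ ≠ 1 := by
    intro h; rw [h, orderOf_one] at hord; exact (by norm_num : (1 : ℕ) ≠ 3) hord
  obtain ⟨hsign, hpsi⟩ := key12 σ hσ3 hσ1
  have hsτ : ∀ i, Equiv.Perm.sign (τ i) = 1 := by
    intro i
    have h := hconj i
    rw [isConj_iff] at h
    obtain ⟨c, hc⟩ := h
    rw [← hc]
    simp [map_mul, hsign]
  -- compute psi of both products
  have hmem : ∀ (f : Fin ℓ → ℕ) (x : Equiv.Perm (Fin 4)),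
      x ∈ List.ofFn (fun i => τ i ^ f i) → Equiv.Perm.sign x = 1 := by
    intro f x hx
    rw [List.mem_ofFn] at hx
    obtain ⟨i, rfl⟩ := hx
    exact (psi_pow (τ i) (hsτ i) (f i)).2
  have key1 := (psi_prod _ (hmem e)).1
  have key2 := (psi_prod _ (hmem (fun i => 2 * e i))).1
  rw [h1] at key1
  rw [h2] at key2
  have e1 : psi σ = ∑ i, (e i : ZMod 3) * psi (τ i) := by
    rw [key1, List.map_ofFn, List.sum_ofFn]
    refine Finset.sum_congr rfl fun i _ => ?_
    exact (psi_pow (τ i) (hsτ i) (e i)).1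
  have e2 : psi σ = ∑ i, ((2 * e i : ℕ) : ZMod 3) * psi (τ i) := by
    rw [key2, List.map_ofFn, List.sum_ofFn]
    refine Finset.sum_congr rfl fun i _ => ?_
    exact (psi_pow (τ i) (hsτ i) (2 * e i)).1
  have e2' : psi σ = 2 * ∑ i, (e i : ZMod 3) * psi (τ i) := by
    rw [e2, Finset.mul_sum]
    refine Finset.sum_congr rfl fun i _ => ?_
    push_cast
    ring
  rw [← e1] at e2'
  apply hpsi
  linear_combination -e2'
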